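/- Every compact metrizable space X can be written as a finite disjoint union X = X₁ ∪ ⋯ ∪ Xₙ of closed-and-open unital subspaces. -/

import Mathlib

open Set

/-- The derived set of a subset `A` of `X`: the points of `A` that are not isolated
in the subspace topology of `A`. -/
def cbStep (X : Type) [TopologicalSpace X] (A : Set X) : Set X :=
  {x | x ∈ A ∧ ∀ U : Set X, IsOpen U → U ∩ A ≠ {x}}

/-- The `α`-th Cantor–Bendixson derivative: `X^{(α)} = ⋂_{β<α} (X^{(β)})^{(1)}`. -/
noncomputable def cbDeriv (X : Type) [TopologicalSpace X] : Ordinal → Set X :=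
  (Ordinal.lt_wf.{0}).fix fun α ih => ⋂ β : {β : Ordinal // β < α}, cbStep X (ih β.1 β.2)

/-- A space is scattered iff some Cantor–Bendixson derivative is empty. -/
def IsScatteredSp (X : Type) [TopologicalSpace X] : Prop :=
  ∃ α : Ordinal.{0}, cbDeriv X α = ∅

/-- The Cantor–Bendixson rank of a point of a scattered space. -/
noncomputable def cbRank (X : Type) [TopologicalSpace X] (x : X) : Ordinal.{0} :=
  sInf {α : Ordinal.{0} | x ∉ cbDeriv X (α + 1)}

open Classical in
/-- The scattered height of a space: the supremum of the Cantor–Bendixson ranks of its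
points if the space is scattered, and `∞ = ⊤` otherwise. -/
noncomputable def scatHeight (X : Type) [TopologicalSpace X] : WithTop Ordinal :=
  if IsScatteredSp X then ↑(⨆ x : X, cbRank X x) else ⊤

/-- A space is unital if it is uncountable, or countable with the derived set at the
scattered height a singleton. -/
def IsUnitalSp (Y : Type) [TopologicalSpace Y] : Prop :=
  ¬ Countable Y ∨ (Countable Y ∧
    ∃ α : Ordinal.{0}, scatHeight Y = ↑α ∧ ∃ a : Y, cbDeriv Y α = {a})

variable {X : Type} [TopologicalSpace X]

theorem cbDeriv_def (α : Ordinal) :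
    cbDeriv X α = ⋂ β : {β : Ordinal // β < α}, cbStep X (cbDeriv X β.1) := by
  rw [cbDeriv, WellFounded.fix_eq]

theorem cbStep_subset (A : Set X) : cbStep X A ⊆ A := fun _ hx => hx.1

theorem cbStep_mono {A B : Set X} (h : A ⊆ B) : cbStep X A ⊆ cbStep X B := by
  rintro x ⟨hxA, hU⟩
  refine ⟨h hxA, fun U hUo heq => hU U hUo ?_⟩
  apply Subset.antisymm
  · exact fun y hy => heq ▸ (⟨hy.1, h hy.2⟩ : y ∈ U ∩ B)
  · rintro y rfl
    have : y ∈ U ∩ B := heq ▸ rfl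
    exact ⟨this.1, hxA⟩

theorem cbDeriv_zero : cbDeriv X 0 = univ := by
  rw [cbDeriv_def]
  apply eq_univ_of_forall
  intro x
  exact mem_iInter.mpr fun ⟨β, hβ⟩ => absurd hβ (zero_le (a := β)).not_gt

theorem cbDeriv_subset_of_lt {β α : Ordinal} (h : β < α) : cbDeriv X α ⊆ cbStep X (cbDeriv X β) := by
  rw [cbDeriv_def (X := X) α]
  exact iInter_subset (fun b : {β : Ordinal // β < α} => cbStep X (cbDeriv X b.1)) ⟨β, h⟩

theorem cbDeriv_antitone {β α : Ordinal} (h : β ≤ α) : cbDeriv X α ⊆ cbDeriv X β := by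
  rcases eq_or_lt_of_le h with rfl | h
  · exact subset_rfl
  · intro x hx
    exact cbStep_subset _ (cbDeriv_subset_of_lt h hx)

theorem cbDeriv_succ (α : Ordinal) : cbDeriv X (α + 1) = cbStep X (cbDeriv X α) := by
  apply Subset.antisymm
  · exact cbDeriv_subset_of_lt (Order.lt_succ α)
  · rw [cbDeriv_def (X := X) (α + 1)]
    refine subset_iInter fun ⟨β, hβ⟩ => ?_
    exact cbStep_mono (cbDeriv_antitone (Order.lt_succ_iff.mp hβ))

theorem cbStep_isClosed {A : Set X} (hA : IsClosed A) : IsClosed (cbStep X A) := by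
  rw [← isOpen_compl_iff]
  rw [isOpen_iff_forall_mem_open]
  intro x hx
  by_cases hxA : x ∈ A
  · have : ∃ U : Set X, IsOpen U ∧ U ∩ A = {x} := by
      by_contra hcon
      push_neg at hcon
      exact hx ⟨hxA, hcon⟩
    obtain ⟨U, hUo, hUA⟩ := this
    refine ⟨U, fun y hyU hyS => ?_, hUo, by
      have : x ∈ U ∩ A := hUA ▸ rfl
      exact this.1⟩
    have hy : y ∈ U ∩ A := ⟨hyU, hyS.1⟩
    rw [hUA] at hy
    subst hy
    exact hx hyS
  · exact ⟨Aᶜ, fun y hy hyS => hy hyS.1, hA.isOpen_compl, hxA⟩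

theorem cbDeriv_isClosed (α : Ordinal) : IsClosed (cbDeriv X α) := by
  induction α using Ordinal.induction with
  | _ α ih =>
    rw [cbDeriv_def]
    exact isClosed_iInter fun ⟨β, hβ⟩ => cbStep_isClosed (ih β hβ)

theorem cbDeriv_stabilizes : ∃ α : Ordinal.{0}, cbDeriv X (α + 1) = cbDeriv X α := by
  by_contra hcon
  push_neg at hcon
  have hinj : Function.Injective (cbDeriv X) := by
    have key : ∀ {β α : Ordinal}, β < α → cbDeriv X α ⊂ cbDeriv X β := by
      intro β α h
      refine ⟨cbDeriv_antitone h.le, fun hsub => ?_⟩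
      have h1 : cbDeriv X (β + 1) = cbDeriv X β := by
        apply Subset.antisymm (cbDeriv_antitone (Order.le_succ β))
        exact hsub.trans (cbDeriv_antitone (Order.succ_le_of_lt h))
      exact hcon β h1
    intro β α h
    by_contra hne
    rcases lt_or_gt_of_ne hne with hlt | hlt
    · exact (key hlt).2 h.subset
    · exact (key hlt).2 h.symm.subset
  exact not_small_ordinal.{0,0} (small_of_injective hinj)

theorem scattered_of_countable [CompactSpace X] [TopologicalSpace.MetrizableSpace X]
    (hc : Countable X) : ∃ α : Ordinal.{0}, cbDeriv X α = ∅ := by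
  obtain ⟨α, hα⟩ := cbDeriv_stabilizes (X := X)
  refine ⟨α, ?_⟩
  by_contra hne
  rw [← ne_eq, ← nonempty_iff_ne_empty] at hne
  letI : MetricSpace X := TopologicalSpace.metrizableSpaceMetric X
  have hperf : Perfect (cbDeriv X α) := by
    refine ⟨cbDeriv_isClosed α, fun x hx => ?_⟩
    have hx' : x ∈ cbStep X (cbDeriv X α) := by
      rw [← cbDeriv_succ, hα]; exact hx
    rw [accPt_iff_nhds]
    intro U hU
    obtain ⟨V, hVU, hVo, hVx⟩ := mem_nhds_iff.mp hU
    have := hx'.2 V hVo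
    have hxV : x ∈ V ∩ cbDeriv X α := ⟨hVx, hx⟩
    have : ∃ y ∈ V ∩ cbDeriv X α, y ≠ x := by
      by_contra hcon
      push_neg at hcon
      exact this (Subset.antisymm (fun y hy => hcon y hy) (fun y hy => hy ▸ hxV))
    obtain ⟨y, hy, hyx⟩ := this
    exact ⟨y, ⟨hVU hy.1, hy.2⟩, hyx⟩
  obtain ⟨f, _, _, hfinj⟩ := hperf.exists_nat_bool_injection hne
  have : Countable (ℕ → Bool) := Function.Injective.countable hfinj
  revert this
  intro h
  obtain ⟨g, hg⟩ := Countable.exists_injective_nat (ℕ → Bool)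
  have hinj2 : Function.Injective ((fun s n => @decide (n ∈ s) (Classical.propDecidable _) : Set ℕ → ℕ → Bool)) := by
    intro s t hst
    ext n
    exact decide_eq_decide.mp (congrFun hst n)
  exact Function.cantor_injective _ (hg.comp hinj2)

theorem cbStep_restrict {P : Set X} (hP : IsOpen P) (B : Set X) :
    cbStep ↥P (Subtype.val ⁻¹' B) = Subtype.val ⁻¹' cbStep X B := by
  ext z
  obtain ⟨x, hxP⟩ := z
  simp only [cbStep, mem_setOf_eq, mem_preimage]
  constructor
  · rintro ⟨hxB, hV⟩
    refine ⟨hxB, fun U hUo hUB => ?_⟩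
    refine hV (Subtype.val ⁻¹' U) (hUo.preimage continuous_subtype_val) ?_
    ext w
    obtain ⟨y, hyP⟩ := w
    simp only [mem_inter_iff, mem_preimage, mem_singleton_iff, Subtype.mk_eq_mk]
    constructor
    · rintro ⟨hyU, hyB⟩
      have : y ∈ U ∩ B := ⟨hyU, hyB⟩
      rw [hUB] at this
      exact this
    · intro h
      rw [h]
      have : x ∈ U ∩ B := hUB ▸ rfl
      exact ⟨this.1, this.2⟩
  · rintro ⟨hxB, hU⟩
    refine ⟨hxB, fun V hVo hVB => ?_⟩
    obtain ⟨U, hUo, rfl⟩ := isOpen_induced_iff.mp hVo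
    refine hU (U ∩ P) (hUo.inter hP) ?_
    ext y
    simp only [mem_inter_iff, mem_singleton_iff]
    constructor
    · rintro ⟨⟨hyU, hyP⟩, hyB⟩
      have : (⟨y, hyP⟩ : ↥P) ∈ Subtype.val ⁻¹' U ∩ Subtype.val ⁻¹' B := ⟨hyU, hyB⟩
      rw [hVB] at this
      exact congrArg Subtype.val this
    · intro h
      rw [h]
      have : (⟨x, hxP⟩ : ↥P) ∈ Subtype.val ⁻¹' U ∩ Subtype.val ⁻¹' B := hVB ▸ rfl
      exact ⟨⟨this.1, hxP⟩, this.2⟩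

theorem cbDeriv_restrict {P : Set X} (hP : IsOpen P) (α : Ordinal) :
    cbDeriv ↥P α = Subtype.val ⁻¹' cbDeriv X α := by
  induction α using Ordinal.induction with
  | _ α ih =>
    rw [cbDeriv_def (X := ↥P) α, cbDeriv_def (X := X) α, preimage_iInter]
    exact iInter_congr fun ⟨β, hβ⟩ => by rw [ih β hβ, cbStep_restrict hP]

theorem exists_clopen_ball {Y : Type} [MetricSpace Y] [Countable Y] (x : Y) {ε : ℝ}
    (hε : 0 < ε) : ∃ C : Set Y, IsClopen C ∧ x ∈ C ∧ C ⊆ Metric.ball x ε := by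
  have hS : (Set.range (dist x)).Countable := countable_range _
  have : ¬ (Set.Ioo (0:ℝ) ε ⊆ Set.range (dist x)) := by
    intro hsub
    have : (Set.Ioo (0:ℝ) ε).Countable := hS.mono hsub
    rw [← Cardinal.le_aleph0_iff_set_countable, Cardinal.mk_Ioo_real hε] at this
    exact absurd (this.trans_lt Cardinal.aleph0_lt_continuum) (lt_irrefl _)
  obtain ⟨r, hr, hrS⟩ := not_subset.mp this
  refine ⟨Metric.ball x r, ⟨?_, Metric.isOpen_ball⟩, Metric.mem_ball_self hr.1,
    Metric.ball_subset_ball hr.2.le⟩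
  have : Metric.ball x r = Metric.closedBall x r := by
    apply Subset.antisymm Metric.ball_subset_closedBall
    intro y hy
    rcases lt_or_eq_of_le (Metric.mem_closedBall.mp hy) with h | h
    · exact h
    · exact absurd ⟨y, by rw [dist_comm]; exact h⟩ hrS
  rw [this]
  exact Metric.isClosed_closedBall

theorem exists_top_level [CompactSpace X] [TopologicalSpace.MetrizableSpace X]
    [Countable X] [Nonempty X] :
    ∃ β : Ordinal.{0}, (cbDeriv X β).Finite ∧ (cbDeriv X β).Nonempty ∧
      cbDeriv X (β + 1) = ∅ := by
  have hscat := scattered_of_countable (X := X) inferInstance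
  set S : Set Ordinal.{0} := {α | cbDeriv X α = ∅} with hS
  have hSne : S.Nonempty := hscat
  set μ := sInf S with hμ
  have hμS : μ ∈ S := csInf_mem hSne
  have hlt : ∀ β < μ, (cbDeriv X β).Nonempty := by
    intro β hβ
    rw [nonempty_iff_ne_empty]
    intro h
    exact absurd (csInf_le' (s := S) h) (not_le_of_gt hβ)
  have hμ0 : μ ≠ 0 := by
    intro h
    have : cbDeriv X 0 = ∅ := h ▸ hμS
    rw [cbDeriv_zero] at this
    exact (univ_nonempty (α := X)).ne_empty this
  rcases Ordinal.zero_or_succ_or_isSuccLimit μ with h | ⟨β, hβ⟩ | hlim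
  · exact absurd h hμ0
  · -- μ = β + 1
    replace hβ := hβ.symm
    have hβlt : β < μ := hβ ▸ Order.lt_succ β
    have hDne : (cbDeriv X β).Nonempty := hlt β hβlt
    have hsucc : cbDeriv X (β + 1) = ∅ := by
      have : cbDeriv X μ = ∅ := hμS
      rwa [hβ] at this
    refine ⟨β, ?_, hDne, hsucc⟩
    -- finiteness: every point of D is isolated in D
    have hstep : cbStep X (cbDeriv X β) = ∅ := by rw [← cbDeriv_succ]; exact hsucc
    have hiso : ∀ x ∈ cbDeriv X β, ∃ U : Set X, IsOpen U ∧ U ∩ cbDeriv X β = {x} := by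
      intro x hx
      by_contra hcon
      push_neg at hcon
      have : x ∈ cbStep X (cbDeriv X β) := ⟨hx, fun U hU => hcon U hU⟩
      rw [hstep] at this
      exact this
    choose! U hUo hUx using hiso
    have hcompact : IsCompact (cbDeriv X β) := (cbDeriv_isClosed β).isCompact
    have hcover : cbDeriv X β ⊆ ⋃ x ∈ cbDeriv X β, U x := by
      intro x hx
      exact mem_biUnion hx (by
        have : x ∈ U x ∩ cbDeriv X β := (hUx x hx) ▸ rfl
        exact this.1)
    obtain ⟨t, htsub, htfin, htcover⟩ :=
      hcompact.elim_finite_subcover_image (fun x hx => hUo x hx) hcover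
    have : cbDeriv X β ⊆ t := by
      intro y hy
      obtain ⟨x, hxt, hyU⟩ := by
        have := htcover hy
        simpa using this
      have : y ∈ U x ∩ cbDeriv X β := ⟨hyU, hy⟩
      rw [hUx x (htsub hxt)] at this
      exact this ▸ hxt
    exact htfin.subset this
  · -- limit case: contradiction via compactness
    exfalso
    have : (cbDeriv X μ).Nonempty := by
      rw [cbDeriv_def (X := X) μ]
      have hne : Nonempty {β : Ordinal.{0} // β < μ} := ⟨⟨0, pos_iff_ne_zero.mpr hμ0⟩⟩
      apply IsCompact.nonempty_iInter_of_directed_nonempty_isCompact_isClosed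
      · intro ⟨a, ha⟩ ⟨b, hb⟩
        rcases le_total a b with h | h
        · exact ⟨⟨b, hb⟩, cbStep_mono (cbDeriv_antitone h), subset_rfl⟩
        · exact ⟨⟨a, ha⟩, subset_rfl, cbStep_mono (cbDeriv_antitone h)⟩
      · intro ⟨a, ha⟩
        have : a + 1 < μ := hlim.succ_lt ha
        have h1 : cbDeriv X (a + 1) = cbStep X (cbDeriv X a) := cbDeriv_succ a
        rw [← h1]
        exact hlt _ this
      · intro ⟨a, ha⟩
        exact (cbStep_isClosed (cbDeriv_isClosed a)).isCompact
      · intro ⟨a, ha⟩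
        exact cbStep_isClosed (cbDeriv_isClosed a)
    exact this.ne_empty hμS

theorem piece_unital_aux {β : Ordinal.{0}} {P : Set X} (hP : IsOpen P) {a : X}
    (hPD : P ∩ cbDeriv X β = {a}) (hsucc : cbDeriv X (β + 1) = ∅) :
    (∃ α : Ordinal.{0}, cbDeriv ↥P α = ∅) ∧
    (⨆ x : ↥P, cbRank ↥P x) = β ∧
    ∃ b : ↥P, cbDeriv ↥P β = {b} := by
  have haP : a ∈ P := by
    have : a ∈ P ∩ cbDeriv X β := hPD ▸ rfl
    exact this.1
  have haD : a ∈ cbDeriv X β := by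
    have : a ∈ P ∩ cbDeriv X β := hPD ▸ rfl
    exact this.2
  have hPempty : cbDeriv ↥P (β + 1) = ∅ := by
    rw [cbDeriv_restrict hP, hsucc, preimage_empty]
  have hrank_le : ∀ x : ↥P, cbRank ↥P x ≤ β := by
    intro x
    apply csInf_le'
    simp only [mem_setOf_eq, hPempty]
    exact notMem_empty x
  have hrank_a : cbRank ↥P ⟨a, haP⟩ = β := by
    apply le_antisymm (hrank_le _)
    apply le_csInf
    · exact ⟨β, by simp only [mem_setOf_eq, hPempty]; exact notMem_empty _⟩
    · intro α hα
      by_contra hlt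
      push_neg at hlt
      apply hα
      rw [cbDeriv_restrict hP]
      simp only [mem_preimage]
      exact cbDeriv_antitone (by
        rw [Ordinal.add_one_eq_succ]
        exact Order.succ_le_of_lt hlt) haD
  haveI : Nonempty ↥P := ⟨⟨a, haP⟩⟩
  refine ⟨⟨β + 1, hPempty⟩, ?_, ⟨⟨a, haP⟩, ?_⟩⟩
  · apply le_antisymm
    · exact ciSup_le (ι := ↥P) (f := fun x => cbRank ↥P x) (c := β) hrank_le
      |>.trans_eq rfl
    · exact le_ciSup_of_le ⟨β, by rintro y ⟨x, rfl⟩; exact hrank_le x⟩ ⟨a, haP⟩ hrank_a.ge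
  · rw [cbDeriv_restrict hP]
    ext z
    obtain ⟨x, hxP⟩ := z
    simp only [mem_preimage, mem_singleton_iff, Subtype.mk_eq_mk]
    constructor
    · intro hx
      have : x ∈ P ∩ cbDeriv X β := ⟨hxP, hx⟩
      rw [hPD] at this
      exact this
    · intro h
      rw [h]
      exact haD

/-- Partition construction from a family of clopen sets each meeting a finite set in
one point. -/
theorem partition_construct {n : ℕ} (hn : 0 < n) (C : Fin n → Set X)
    (hCclopen : ∀ i, IsClopen (C i)) (a : Fin n → X) (haC : ∀ i, a i ∈ C i)
    (hsep : ∀ i j, a i ∈ C j → i = j) :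
    ∃ P : Fin n → Set X,
      (∀ i, IsClopen (P i)) ∧
      (Pairwise fun i j => Disjoint (P i) (P j)) ∧
      (⋃ i, P i) = univ ∧
      (∀ i, a i ∈ P i) ∧
      (∀ i, P i ⊆ C i ∪ (⋃ j, C j)ᶜ) := by
  classical
  set i0 : Fin n := ⟨0, hn⟩ with hi0
  set P : Fin n → Set X := fun i =>
    (C i \ ⋃ j : Fin n, ⋃ (_ : j < i), C j) ∪ (if i = i0 then (⋃ j, C j)ᶜ else ∅) with hPdef
  have hWclopen : ∀ i : Fin n, IsClopen (⋃ j : Fin n, ⋃ (_ : j < i), C j) := by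
    intro i
    exact isClopen_iUnion_of_finite fun j => isClopen_iUnion_of_finite fun _ => hCclopen j
  have hPclopen : ∀ i, IsClopen (P i) := by
    intro i
    apply IsClopen.union ((hCclopen i).diff (hWclopen i))
    by_cases h : i = i0
    · rw [if_pos h]
      exact (isClopen_iUnion_of_finite hCclopen).compl
    · rw [if_neg h]
      exact isClopen_empty
  have hPsub : ∀ i, P i ⊆ C i ∪ (⋃ j, C j)ᶜ := by
    intro i x hx
    rcases hx with hx | hx
    · exact Or.inl hx.1
    · by_cases h : i = i0
      · rw [if_pos h] at hx
        exact Or.inr hx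
      · rw [if_neg h] at hx
        exact absurd hx (notMem_empty x)
  refine ⟨P, hPclopen, ?_, ?_, ?_, hPsub⟩
  · -- pairwise disjoint
    have key : ∀ i j : Fin n, i < j → Disjoint (P i) (P j) := by
      intro i j hij
      rw [disjoint_left]
      intro x hxi hxj
      have hxj' : x ∈ C j \ ⋃ k : Fin n, ⋃ (_ : k < j), C k := by
        rcases hxj with h | h
        · exact h
        · rw [if_neg (by rintro rfl; exact absurd hij (by simp [hi0, Fin.lt_def])) ] at h
          exact absurd h (notMem_empty x)
      have hxnotCi : x ∉ C i := fun hCi =>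
        hxj'.2 (mem_iUnion.mpr ⟨i, mem_iUnion.mpr ⟨hij, hCi⟩⟩)
      rcases hPsub i hxi with h | h
      · exact hxnotCi h
      · exact h (mem_iUnion.mpr ⟨j, hxj'.1⟩)
    intro i j hij
    rcases lt_or_gt_of_ne hij with h | h
    · exact key i j h
    · exact (key j i h).symm
  · -- union is univ
    apply eq_univ_of_forall
    intro x
    by_cases hx : x ∈ ⋃ j, C j
    · have : {j : Fin n | x ∈ C j}.Nonempty := by
        obtain ⟨j, hj⟩ := mem_iUnion.mp hx
        exact ⟨j, hj⟩
      obtain ⟨i, hiS, hmin⟩ :=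
        Set.exists_min_image {j : Fin n | x ∈ C j} id (Set.toFinite _) this
      refine mem_iUnion.mpr ⟨i, Or.inl ⟨hiS, ?_⟩⟩
      intro hmem
      obtain ⟨k, hk⟩ := mem_iUnion.mp hmem
      obtain ⟨hki, hxk⟩ := mem_iUnion.mp hk
      exact absurd (hmin k hxk) (not_le_of_gt hki)
    · refine mem_iUnion.mpr ⟨i0, Or.inr ?_⟩
      rw [if_pos rfl]
      exact hx
  · -- a i ∈ P i
    intro i
    refine Or.inl ⟨haC i, ?_⟩
    intro hmem
    obtain ⟨k, hk⟩ := mem_iUnion.mp hmem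
    obtain ⟨hki, hxk⟩ := mem_iUnion.mp hk
    exact absurd (hsep i k hxk) (by rintro rfl; exact lt_irrefl _ hki)

/-- Every compact metrizable space is a finite disjoint union of clopen unital subspaces. -/
theorem stmt6 {X : Type} [TopologicalSpace X] [CompactSpace X]
    [TopologicalSpace.MetrizableSpace X] :
    ∃ (n : ℕ) (P : Fin n → Set X),
      (∀ i, IsClopen (P i)) ∧
      (Pairwise fun i j => Disjoint (P i) (P j)) ∧
      (⋃ i, P i) = univ ∧
      ∀ i, IsUnitalSp ↥(P i) := by
  classical
  by_cases hcount : Countable X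
  · by_cases hne : Nonempty X
    · letI : MetricSpace X := TopologicalSpace.metrizableSpaceMetric X
      obtain ⟨β, hfin, hDne, hsucc⟩ := exists_top_level (X := X)
      haveI : Fintype ↥(cbDeriv X β) := hfin.fintype
      set n := Fintype.card ↥(cbDeriv X β) with hn_def
      have hn : 0 < n := Fintype.card_pos_iff.mpr hDne.to_subtype
      set e : Fin n ≃ ↥(cbDeriv X β) := (Fintype.equivFin _).symm with he
      set a : Fin n → X := fun i => (e i : X) with ha
      have haD : ∀ i, a i ∈ cbDeriv X β := fun i => (e i).2
      have hainj : ∀ i j, a i = a j → i = j := fun i j h =>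
        e.injective (Subtype.ext h)
      have hsurj : ∀ x ∈ cbDeriv X β, ∃ i, a i = x := fun x hx =>
        ⟨e.symm ⟨x, hx⟩, by simp [ha]⟩
      have hC : ∀ i : Fin n, ∃ C : Set X, IsClopen C ∧ a i ∈ C ∧
          C ∩ cbDeriv X β = {a i} := by
        intro i
        have hclosed : IsClosed (cbDeriv X β \ {a i}) :=
          (hfin.subset diff_subset).isClosed
        have hmem : a i ∈ (cbDeriv X β \ {a i})ᶜ := fun h => h.2 rfl
        obtain ⟨ε, hε, hball⟩ := Metric.isOpen_iff.mp hclosed.isOpen_compl _ hmem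
        obtain ⟨C, hCc, hCa, hCb⟩ := exists_clopen_ball (a i) hε
        refine ⟨C, hCc, hCa, ?_⟩
        apply Subset.antisymm
        · rintro x ⟨hxC, hxD⟩
          have : x ∉ cbDeriv X β \ {a i} := hball (hCb hxC)
          by_contra hxa
          exact this ⟨hxD, hxa⟩
        · intro x hx
          rw [mem_singleton_iff] at hx
          rw [hx]
          exact ⟨hCa, haD i⟩
      choose C hCclopen hCa hCD using hC
      have hsep : ∀ i j, a i ∈ C j → i = j := by
        intro i j h
        have : a i ∈ C j ∩ cbDeriv X β := ⟨h, haD i⟩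
        rw [hCD j] at this
        exact hainj i j this
      obtain ⟨P, h1, h2, h3, h4, h5⟩ := partition_construct hn C hCclopen a hCa hsep
      refine ⟨n, P, h1, h2, h3, fun i => ?_⟩
      have hPD : P i ∩ cbDeriv X β = {a i} := by
        apply Subset.antisymm
        · rintro x ⟨hxP, hxD⟩
          rcases h5 i hxP with h | h
          · have : x ∈ C i ∩ cbDeriv X β := ⟨h, hxD⟩
            rw [hCD i] at this
            exact this
          · obtain ⟨k, hk⟩ := hsurj x hxD
            exact absurd (mem_iUnion.mpr ⟨k, hk ▸ hCa k⟩) h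
        · intro x hx
          rw [mem_singleton_iff] at hx
          rw [hx]
          exact ⟨h4 i, haD i⟩
      obtain ⟨hscat, hsup, b, hb⟩ := piece_unital_aux (h1 i).isOpen hPD hsucc
      refine Or.inr ⟨inferInstance, β, ?_, b, hb⟩
      have hscatP : IsScatteredSp ↥(P i) := hscat
      unfold scatHeight
      rw [if_pos hscatP, hsup]
    · refine ⟨0, fun i => Fin.elim0 i, fun i => Fin.elim0 i, fun i j _ => Fin.elim0 i,
        ?_, fun i => Fin.elim0 i⟩
      rw [iUnion_of_empty]
      exact eq_univ_of_forall fun x => (hne ⟨x⟩).elim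
  · refine ⟨1, fun _ => univ, fun _ => isClopen_univ, ?_, iUnion_const univ, fun i => Or.inl ?_⟩
    · intro i j hij
      exact absurd (Subsingleton.elim i j) hij
    · intro hcu
      exact hcount (Countable.of_equiv _ (Equiv.Set.univ X))
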